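/- The bivariate inverse hypergeometric pmf with arbitrary parameters N₁, N₂, N₃, k sums to 1 over its support {0,…,N₁}×{0,…,N₂}. -/

import Mathlib

open BigOperators Finset

/-- Key natural-number identity behind the telescoping step. -/
lemma IH_aux_nat (M N₃ n j : ℕ) (hj : j ≤ N₃) (hjn : j ≤ n) :
    N₃.choose j * M.choose (n - j) * (M + N₃ - n) +
      j * (N₃.choose j * M.choose (n + 1 - j)) =
    N₃.choose j * M.choose (n - j) * (N₃ - j) +
      (n + 1) * (N₃.choose j * M.choose (n + 1 - j)) := by
  rcases le_or_gt (n - j) M with h | h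
  · have h1 : M.choose (n - j + 1) * (n - j + 1) = M.choose (n - j) * (M - (n - j)) :=
      Nat.choose_succ_right_eq M (n - j)
    have h2 : n + 1 - j = n - j + 1 := by omega
    rw [h2]
    have hsplit : M + N₃ - n = (N₃ - j) + (M - (n - j)) := by omega
    have hn1 : n + 1 = (n - j + 1) + j := by omega
    rw [hsplit, hn1]
    set a := N₃ - j
    set b := M - (n - j)
    set q := n - j + 1
    zify at h1 ⊢
    linear_combination (-(N₃.choose j : ℤ)) * h1
  · have e1 : M.choose (n - j) = 0 := Nat.choose_eq_zero_of_lt h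
    have e2 : M.choose (n + 1 - j) = 0 := Nat.choose_eq_zero_of_lt (by omega)
    simp [e1, e2]

/-- The per-`j` telescoping identity over `ℝ`. -/
lemma IH_step_j (M N₃ n j : ℕ) (hj1 : j + 1 ≤ N₃) (hjn : j ≤ n) (hn : n + 1 ≤ M + N₃) :
    ((N₃.choose j * M.choose (n - j) : ℕ) : ℝ) / ((M + N₃).choose n : ℕ)
      - ((N₃.choose j * M.choose (n + 1 - j) : ℕ) : ℝ) / ((M + N₃).choose (n + 1) : ℕ)
    = (((j + 1) * N₃.choose (j + 1) * M.choose (n - j) : ℕ) : ℝ)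
        / (((M + N₃ - n) * (M + N₃).choose n : ℕ) : ℝ)
      - ((j * N₃.choose j * M.choose (n + 1 - j) : ℕ) : ℝ)
        / (((M + N₃ - n) * (M + N₃).choose n : ℕ) : ℝ) := by
  have hcn : (0 : ℝ) < ((M + N₃).choose n : ℝ) := by
    exact_mod_cast Nat.choose_pos (by omega)
  have hcn1 : (0 : ℝ) < ((M + N₃).choose (n + 1) : ℝ) := by
    exact_mod_cast Nat.choose_pos hn
  have hdn : (0 : ℝ) < ((M + N₃ - n : ℕ) : ℝ) := by
    exact_mod_cast Nat.lt_of_lt_of_le (Nat.zero_lt_succ 0) (by omega)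
  have r1nat : (M + N₃ - n) * (M + N₃).choose n = (n + 1) * (M + N₃).choose (n + 1) := by
    rw [Nat.mul_comm, Nat.mul_comm (n + 1)]
    exact (Nat.choose_succ_right_eq (M + N₃) n).symm
  have r1 : ((M + N₃ - n : ℕ) : ℝ) * ((M + N₃).choose n : ℕ)
      = ((n : ℝ) + 1) * ((M + N₃).choose (n + 1) : ℕ) := by exact_mod_cast r1nat
  have r2nat : (j + 1) * N₃.choose (j + 1) = N₃.choose j * (N₃ - j) := by
    rw [Nat.mul_comm]
    exact Nat.choose_succ_right_eq N₃ j
  have r2 : (((j : ℝ) + 1) * (N₃.choose (j + 1) : ℕ))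
      = (N₃.choose j : ℕ) * ((N₃ - j : ℕ) : ℝ) := by exact_mod_cast r2nat
  have key : ((N₃.choose j : ℝ) * M.choose (n - j)) * ((M + N₃ - n : ℕ) : ℝ)
        + (j : ℝ) * ((N₃.choose j : ℝ) * M.choose (n + 1 - j))
      = ((N₃.choose j : ℝ) * M.choose (n - j)) * ((N₃ - j : ℕ) : ℝ)
        + ((n : ℝ) + 1) * ((N₃.choose j : ℝ) * M.choose (n + 1 - j)) := by
    exact_mod_cast congrArg (Nat.cast : ℕ → ℝ) (IH_aux_nat M N₃ n j (by omega) hjn)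
  rw [div_sub_div _ _ (ne_of_gt hcn) (ne_of_gt hcn1), div_sub_div_same,
    div_eq_div_iff (by positivity) (by push_cast; positivity)]
  push_cast
  linear_combination (((M + N₃).choose n : ℝ) * ((M + N₃).choose (n + 1) : ℝ)) * key
    - ((N₃.choose j : ℝ) * (M.choose (n + 1 - j) : ℝ) * ((M + N₃).choose n : ℝ)) * r1
    - ((M.choose (n - j) : ℝ) * ((M + N₃).choose n : ℝ) * ((M + N₃).choose (n + 1) : ℝ)) * r2

/-- Collapsing the double sum via Vandermonde. -/
lemma IH_collapse (N₁ N₂ : ℕ) (T : ℕ → ℝ) :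
    ∑ x ∈ range (N₁ + 1), ∑ y ∈ range (N₂ + 1),
        (N₁.choose x : ℝ) * (N₂.choose y : ℝ) * T (x + y)
    = ∑ s ∈ range (N₁ + N₂ + 1), ((N₁ + N₂).choose s : ℝ) * T s := by
  rw [← Finset.sum_product']
  rw [← Finset.sum_fiberwise_of_maps_to (g := fun p : ℕ × ℕ => p.1 + p.2)
      (t := range (N₁ + N₂ + 1)) (fun p hp => by
        simp only [mem_product, mem_range] at hp
        simp only [mem_range]; omega)]
  refine Finset.sum_congr rfl fun s hs => ?_
  have hsub : ((range (N₁ + 1) ×ˢ range (N₂ + 1)).filter (fun p => p.1 + p.2 = s))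
      ⊆ Finset.HasAntidiagonal.antidiagonal s := by
    intro p hp
    simp only [mem_filter] at hp
    simpa [Finset.mem_antidiagonal] using hp.2
  rw [Finset.sum_subset hsub (fun p hp hnp => ?_)]
  · have : ∀ p ∈ Finset.HasAntidiagonal.antidiagonal s,
        (N₁.choose p.1 : ℝ) * (N₂.choose p.2 : ℝ) * T (p.1 + p.2)
        = (N₁.choose p.1 * N₂.choose p.2 : ℕ) * T s := by
      intro p hp
      rw [Finset.HasAntidiagonal.mem_antidiagonal] at hp
      rw [hp]; push_cast; ring
    rw [Finset.sum_congr rfl this, ← Finset.sum_mul, ← Nat.cast_sum, ← Nat.add_choose_eq]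
  · rw [Finset.HasAntidiagonal.mem_antidiagonal] at hp
    have hno : ¬(p.1 ∈ range (N₁ + 1) ∧ p.2 ∈ range (N₂ + 1)) := by
      intro hc
      exact hnp (mem_filter.mpr ⟨mem_product.mpr hc, hp⟩)
    rw [mem_range, mem_range] at hno
    rcases not_and_or.mp hno with h1 | h2
    · simp [Nat.choose_eq_zero_of_lt (show N₁ < p.1 by omega)]
    · simp [Nat.choose_eq_zero_of_lt (show N₂ < p.2 by omega)]

/-- the bivariate inverse hypergeometric pmf with arbitrary
parameters `N₁, N₂, N₃, k` (with `1 ≤ k ≤ N₃`, `N = N₁+N₂+N₃`) sums to 1 over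
its support `{0,…,N₁} × {0,…,N₂}`. -/
theorem inverse_hypergeometric_sums_to_one
    (N₁ N₂ N₃ k : ℕ) (hk1 : 1 ≤ k) (hk2 : k ≤ N₃) :
    ∑ x ∈ Finset.range (N₁ + 1), ∑ y ∈ Finset.range (N₂ + 1),
      (((N₃ : ℝ) - (k : ℝ) + 1) /
          ((N₁ + N₂ + N₃ : ℕ) - ((x : ℝ) + (y : ℝ) + (k : ℝ) - 1))) *
        ((Nat.choose N₁ x * Nat.choose N₂ y * Nat.choose N₃ (k - 1) : ℕ) : ℝ) /
          ((Nat.choose (N₁ + N₂ + N₃) (x + y + k - 1) : ℕ) : ℝ) = 1 := by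
  set M := N₁ + N₂ with hM
  set T : ℕ → ℝ := fun s =>
    (((N₃ : ℝ) - (k : ℝ) + 1) / ((M + N₃ : ℕ) - ((s : ℝ) + (k : ℝ) - 1))) *
      ((N₃.choose (k - 1) : ℕ) : ℝ) / (((M + N₃).choose (s + k - 1) : ℕ) : ℝ) with hT
  have hrw : ∑ x ∈ Finset.range (N₁ + 1), ∑ y ∈ Finset.range (N₂ + 1),
      (((N₃ : ℝ) - (k : ℝ) + 1) /
          ((N₁ + N₂ + N₃ : ℕ) - ((x : ℝ) + (y : ℝ) + (k : ℝ) - 1))) *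
        ((Nat.choose N₁ x * Nat.choose N₂ y * Nat.choose N₃ (k - 1) : ℕ) : ℝ) /
          ((Nat.choose (N₁ + N₂ + N₃) (x + y + k - 1) : ℕ) : ℝ)
      = ∑ x ∈ range (N₁ + 1), ∑ y ∈ range (N₂ + 1),
        (N₁.choose x : ℝ) * (N₂.choose y : ℝ) * T (x + y) := by
    refine Finset.sum_congr rfl fun x _ => Finset.sum_congr rfl fun y _ => ?_
    have hidx : x + y + k - 1 = (x + y) + k - 1 := by omega
    have hNM : N₁ + N₂ + N₃ = M + N₃ := by omega
    rw [hT, hidx, hNM]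
    push_cast
    ring
  rw [hrw, IH_collapse N₁ N₂ T, ← hM]
  -- telescoping sum
  set N := M + N₃ with hNdef
  set G : ℕ → ℝ := fun s =>
    ∑ j ∈ range k, ((N₃.choose j * M.choose (s + k - 1 - j) : ℕ) : ℝ)
      / ((N.choose (s + k - 1) : ℕ) : ℝ) with hG
  have hstep : ∀ s ∈ range (M + 1), (M.choose s : ℝ) * T s = G s - G (s + 1) := by
    intro s hs
    rw [mem_range] at hs
    have hsM : s ≤ M := by omega
    set n := s + k - 1 with hn
    have hnN : n + 1 ≤ N := by
      simp only [hNdef, hn]; omega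
    -- F is the telescoping sequence
    set F : ℕ → ℝ := fun j =>
      ((j * N₃.choose j * M.choose (n + 1 - j) : ℕ) : ℝ)
        / (((N - n) * N.choose n : ℕ) : ℝ) with hF
    have hGdiff : G s - G (s + 1) = ∑ j ∈ range k, (F (j + 1) - F j) := by
      rw [hG]
      simp only []
      rw [← Finset.sum_sub_distrib]
      refine Finset.sum_congr rfl fun j hj => ?_
      rw [mem_range] at hj
      have e1 : s + k - 1 - j = n - j := by rw [hn]
      have e2 : s + 1 + k - 1 - j = n + 1 - j := by omega
      have e3 : s + 1 + k - 1 = n + 1 := by omega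
      rw [e1, e2, e3]
      have := IH_step_j M N₃ n j (by omega) (by omega) (by rw [← hNdef]; exact hnN)
      rw [← hNdef] at this
      rw [this]
      simp only [hF]
      push_cast
      ring
    rw [hGdiff, Finset.sum_range_sub F]
    have hF0 : F 0 = 0 := by simp [hF]
    have hFk : F k = ((k * N₃.choose k * M.choose s : ℕ) : ℝ)
        / (((N - n) * N.choose n : ℕ) : ℝ) := by
      simp only [hF]
      have : n + 1 - k = s := by omega
      rw [this]
    rw [hF0, hFk, sub_zero]
    -- now show (M.choose s) * T s equals this
    have hc1 : k * N₃.choose k = N₃.choose (k - 1) * (N₃ - (k - 1)) := by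
      have := Nat.choose_succ_right_eq N₃ (k - 1)
      have hkk : k - 1 + 1 = k := by omega
      rw [hkk] at this
      rw [Nat.mul_comm]
      exact this
    have hcnpos : (0 : ℝ) < (N.choose n : ℝ) := by
      exact_mod_cast Nat.choose_pos (by omega)
    have hdnpos : (0 : ℝ) < ((N - n : ℕ) : ℝ) := by
      exact_mod_cast Nat.lt_of_lt_of_le Nat.zero_lt_one (by omega)
    rw [hT]
    simp only []
    have hNn : ((N : ℕ) : ℝ) - ((s : ℝ) + (k : ℝ) - 1) = ((N - n : ℕ) : ℝ) := by
      rw [hn]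
      push_cast [Nat.cast_sub (show s + k - 1 ≤ N by omega), hn]
      push_cast [Nat.cast_sub (show 1 ≤ s + k by omega)]
      ring
    have hNk : ((N₃ : ℝ) - (k : ℝ) + 1) = ((N₃ - (k - 1) : ℕ) : ℝ) := by
      push_cast [Nat.cast_sub (show k - 1 ≤ N₃ by omega), Nat.cast_sub hk1]
      ring
    rw [hNn, hNk]
    have hc1' : ((k : ℝ) * N₃.choose k) = (N₃.choose (k - 1) : ℝ) * ((N₃ - (k - 1) : ℕ) : ℝ) := by
      exact_mod_cast congrArg (Nat.cast : ℕ → ℝ) hc1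
    push_cast
    field_simp
    linear_combination (-(M.choose s : ℝ)) * hc1'
      + ((M.choose s : ℝ) * ((N₃ - (k - 1) : ℕ) : ℝ) * (N₃.choose (k - 1) : ℝ)) * mul_inv_cancel₀ hcnpos.ne'
  rw [Finset.sum_congr rfl hstep, Finset.sum_range_sub' G]
  have hG0 : G 0 = 1 := by
    rw [hG]
    simp only []
    have hidx : 0 + k - 1 = k - 1 := by omega
    rw [hidx]
    rw [← Finset.sum_div]
    rw [div_eq_one_iff_eq (by
      have : 0 < N.choose (k - 1) := Nat.choose_pos (by omega)
      exact_mod_cast this.ne')]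
    rw [← Nat.cast_sum]
    congr 1
    have hvdm := Nat.add_choose_eq N₃ M (k - 1)
    rw [hNdef, Nat.add_comm M N₃] at *
    rw [hvdm, Finset.Nat.sum_antidiagonal_eq_sum_range_succ
      (f := fun i j => N₃.choose i * M.choose j)]
    have hks : (k - 1).succ = k := by omega
    rw [hks]
  have hGM : G (M + 1) = 0 := by
    rw [hG]
    refine Finset.sum_eq_zero fun j hj => ?_
    rw [mem_range] at hj
    have : M < M + 1 + k - 1 - j := by omega
    rw [Nat.choose_eq_zero_of_lt this]
    simp
  rw [hG0, hGM, sub_zero]
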